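/- arXiv:2112.06973 — 7 statements merged into one kernel-verified Lean document; each statement's English description precedes it below -/
import Mathlib

section
/- Suppose r·R₀ ≠ g·G₀ and r·R₀, g·G₀ > 0. Then the functions G(t) = (r·G₀·R₀ - g·G₀²)·exp((g·G₀ - r·R₀)·t) / (r·R₀ - g·G₀·exp((g·G₀ - r·R₀)·t)) and R(t) = (r·R₀² - g·G₀·R₀) / (r·R₀ - g·G₀·exp((g·G₀ - r·R₀)·t)) solve the unaimed-fire Lanchester system R' = -g·R·G, G' = -r·R·G on [0, ∞) with G(0) = G₀, R(0) = R₀. -/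
theorem lanchester_unaimed_explicit_solution (g r G₀ R₀ : ℝ) (hg : 0 < g) (hr : 0 < r)
    (hG₀ : 0 < G₀) (hR₀ : 0 < R₀) (hne : r * R₀ ≠ g * G₀)
    (G R : ℝ → ℝ)
    (hGdef : G = fun t => (r * G₀ * R₀ - g * G₀ ^ 2) * Real.exp ((g * G₀ - r * R₀) * t)
      / (r * R₀ - g * G₀ * Real.exp ((g * G₀ - r * R₀) * t)))
    (hRdef : R = fun t => (r * R₀ ^ 2 - g * G₀ * R₀)
      / (r * R₀ - g * G₀ * Real.exp ((g * G₀ - r * R₀) * t))) :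
    (∀ t : ℝ, 0 ≤ t → HasDerivAt R (-(g * R t * G t)) t) ∧
    (∀ t : ℝ, 0 ≤ t → HasDerivAt G (-(r * R t * G t)) t) ∧
    G 0 = G₀ ∧ R 0 = R₀ := by
  set k : ℝ := g * G₀ - r * R₀ with hk
  have hD : ∀ t : ℝ, 0 ≤ t → r * R₀ - g * G₀ * Real.exp (k * t) ≠ 0 := by
    intro t ht
    rcases lt_or_gt_of_ne hne.symm with h | h
    · -- g*G₀ < r*R₀, k < 0
      have hk0 : k ≤ 0 := by simp [hk]; linarith
      have : Real.exp (k * t) ≤ 1 := Real.exp_le_one_iff.mpr (mul_nonpos_of_nonpos_of_nonneg hk0 ht)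
      have hgG : 0 < g * G₀ := mul_pos hg hG₀
      nlinarith [Real.exp_pos (k * t)]
    · have hk0 : 0 ≤ k := by simp [hk]; linarith
      have : 1 ≤ Real.exp (k * t) := Real.one_le_exp (mul_nonneg hk0 ht)
      have hgG : 0 < g * G₀ := mul_pos hg hG₀
      nlinarith [Real.exp_pos (k * t)]
  have hexp : ∀ t : ℝ, HasDerivAt (fun t => Real.exp (k * t)) (Real.exp (k * t) * (k * 1)) t :=
    fun t => ((hasDerivAt_id t).const_mul k).exp
  have hDeriv : ∀ t : ℝ, HasDerivAt (fun t => r * R₀ - g * G₀ * Real.exp (k * t))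
      (0 - g * G₀ * (Real.exp (k * t) * (k * 1))) t :=
    fun t => (hasDerivAt_const t (r * R₀)).sub ((hexp t).const_mul (g * G₀))
  refine ⟨?_, ?_, ?_, ?_⟩
  · intro t ht
    have hd := hD t ht
    have h1 := (hasDerivAt_const t (r * R₀ ^ 2 - g * G₀ * R₀)).div (hDeriv t) hd
    rw [hRdef, hGdef]
    refine h1.congr_deriv ?_
    beta_reduce
    field_simp
    ring
  · intro t ht
    have hd := hD t ht
    have h1 := (((hexp t).const_mul (r * G₀ * R₀ - g * G₀ ^ 2)).div (hDeriv t) hd)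
    rw [hRdef, hGdef]
    refine h1.congr_deriv ?_
    beta_reduce
    field_simp
    ring
  · have h0 : r * R₀ - g * G₀ ≠ 0 := sub_ne_zero.mpr hne
    rw [hGdef]; simp only [mul_zero, Real.exp_zero, mul_one]
    rw [div_eq_iff h0]; ring
  · have h0 : r * R₀ - g * G₀ ≠ 0 := sub_ne_zero.mpr hne
    rw [hRdef]; simp only [mul_zero, Real.exp_zero, mul_one]
    field_simp
end

section
/- In the aimed-fire Lanchester system with g·G(0)² > r·R(0)² and G(0), R(0) > 0, there exists a finite time t* > 0 at which R(t*) = 0 while G(t*) > 0. -/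
theorem lanchester_aimed_finite_time_victory (g r : ℝ) (hg : 0 < g) (hr : 0 < r)
    (G R : ℝ → ℝ)
    (hG : ∀ t : ℝ, HasDerivAt G (-(r * R t)) t)
    (hR : ∀ t : ℝ, HasDerivAt R (-(g * G t)) t)
    (hG0 : 0 < G 0) (hR0 : 0 < R 0)
    (hlt : r * R 0 ^ 2 < g * G 0 ^ 2) :
    ∃ t : ℝ, 0 < t ∧ R t = 0 ∧ 0 < G t := by
  set K := g * G 0 ^ 2 - r * R 0 ^ 2 with hKdef
  have hKpos : 0 < K := by simp only [hKdef]; linarith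
  have hGcont : Continuous G := by
    rw [continuous_iff_continuousAt]; exact fun t => (hG t).continuousAt
  have hRcont : Continuous R := by
    rw [continuous_iff_continuousAt]; exact fun t => (hR t).continuousAt
  -- conservation law
  have hH : ∀ t : ℝ, HasDerivAt (fun t => g * G t ^ 2 - r * R t ^ 2) 0 t := by
    intro t
    have h1 := (((hG t).pow 2).const_mul g).sub (((hR t).pow 2).const_mul r)
    have h2 : HasDerivAt (fun t => g * G t ^ 2 - r * R t ^ 2) _ t := h1
    convert h2 using 1
    norm_num
    ring
  have conserved : ∀ t : ℝ, g * G t ^ 2 - r * R t ^ 2 = K := by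
    intro t
    have := is_const_of_deriv_eq_zero (f := fun t => g * G t ^ 2 - r * R t ^ 2)
      (fun x => (hH x).differentiableAt) (fun x => (hH x).deriv) t 0
    simpa [hKdef] using this
  -- G never vanishes
  have hGne : ∀ t : ℝ, G t ≠ 0 := by
    intro t ht
    have := conserved t
    rw [ht] at this
    nlinarith [sq_nonneg (R t)]
  -- G is everywhere positive
  have hGpos : ∀ t : ℝ, 0 < G t := by
    intro t
    by_contra h
    push_neg at h
    have h0 : (0 : ℝ) ∈ Set.uIcc (G 0) (G t) := by
      rcases lt_or_eq_of_le h with h' | h'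
      · exact Set.mem_uIcc.2 (Or.inr ⟨le_of_lt h', le_of_lt hG0⟩)
      · exact absurd h' (hGne t)
    obtain ⟨s, _, hs⟩ := intermediate_value_uIcc (hGcont.continuousOn (s := Set.uIcc 0 t)) h0
    exact hGne s hs
  by_contra hno
  push_neg at hno
  -- then R is positive for all t ≥ 0
  have hRpos : ∀ t : ℝ, 0 ≤ t → 0 < R t := by
    intro t ht
    rcases eq_or_lt_of_le ht with h' | h'
    · rwa [← h']
    by_contra h
    push_neg at h
    have h0 : (0 : ℝ) ∈ Set.uIcc (R 0) (R t) := Set.mem_uIcc.2 (Or.inr ⟨h, le_of_lt hR0⟩)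
    obtain ⟨s, hsmem, hs⟩ := intermediate_value_uIcc (hRcont.continuousOn (s := Set.uIcc 0 t)) h0
    rw [Set.uIcc_of_le ht] at hsmem
    have hs0 : 0 < s := by
      rcases eq_or_lt_of_le hsmem.1 with h'' | h''
      · exact absurd (h'' ▸ hs) (ne_of_gt hR0)
      · exact h''
    exact absurd (hGpos s) (not_lt.2 (hno s hs0 hs))
  -- lower bound on G for t ≥ 0
  set c := Real.sqrt (K / g) with hcdef
  have hcpos : 0 < c := Real.sqrt_pos.2 (div_pos hKpos hg)
  have hGlb : ∀ t : ℝ, 0 ≤ t → c ≤ G t := by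
    intro t ht
    have h1 : K / g ≤ G t ^ 2 := by
      have := conserved t
      have hr2 : 0 < R t ^ 2 := pow_pos (hRpos t ht) 2
      rw [div_le_iff₀ hg]
      nlinarith
    calc c ≤ Real.sqrt (G t ^ 2) := Real.sqrt_le_sqrt h1
    _ = |G t| := by rw [Real.sqrt_sq_eq_abs]
    _ = G t := abs_of_pos (hGpos t)
  -- MVT on [0, T]
  set T := R 0 / (g * c) + 1 with hTdef
  have hTpos : 0 < T := by positivity
  obtain ⟨ξ, hξmem, hξ⟩ := exists_hasDerivAt_eq_slope R (fun t => -(g * G t)) hTpos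
    hRcont.continuousOn (fun x _ => hR x)
  have hξ0 : 0 ≤ ξ := le_of_lt hξmem.1
  have hGξ : c ≤ G ξ := hGlb ξ hξ0
  have hRT : 0 < R T := hRpos T (le_of_lt hTpos)
  have hT : R 0 / (g * c) + 1 = T := hTdef.symm
  have hgc : 0 < g * c := mul_pos hg hcpos
  -- R T - R 0 = T * (-(g * G ξ)) ≤ -g*c*T
  have hslope : -(g * G ξ) = (R T - R 0) / (T - 0) := hξ
  rw [sub_zero] at hslope
  have h1 : (R T - R 0) / T ≤ -(g * c) := by
    rw [← hslope]
    have : g * c ≤ g * G ξ := by nlinarith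
    linarith
  have h2 : R T - R 0 ≤ -(g * c) * T := by
    have := (div_le_iff₀ hTpos).1 h1
    linarith
  have h3 : -(g * c) * T = -(g * c) * (R 0 / (g * c)) - g * c := by rw [← hT]; ring
  have h4 : -(g * c) * (R 0 / (g * c)) = -R 0 := by
    field_simp
  rw [h3, h4] at h2
  linarith
end

section
/- In the 3D free-for-all unaimed Lanchester system, if x₁X₁(0) > x₂X₂(0) ≥ x₃X₃(0) and all Xᵢ(0) > 0, then X₂(t) → 0 and X₃(t) → 0 as t → +∞, while X₁(t) converges to a strictly positive limit. -/
open Filter Topology Set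

private lemma monoOn_Ici {a : ℝ} {f f' : ℝ → ℝ}
    (hf : ∀ t, a ≤ t → HasDerivAt f (f' t) t)
    (h : ∀ t, a ≤ t → 0 ≤ f' t) : MonotoneOn f (Ici a) := by
  apply monotoneOn_of_deriv_nonneg (convex_Ici a)
  · exact fun t ht => (hf t ht).continuousAt.continuousWithinAt
  · intro t ht
    rw [interior_Ici] at ht
    exact (hf t ht.le).differentiableAt.differentiableWithinAt
  · intro t ht
    rw [interior_Ici] at ht
    rw [(hf t ht.le).deriv]
    exact h t ht.le

private lemma antiOn_Ici {a : ℝ} {f f' : ℝ → ℝ}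
    (hf : ∀ t, a ≤ t → HasDerivAt f (f' t) t)
    (h : ∀ t, a ≤ t → f' t ≤ 0) : AntitoneOn f (Ici a) := by
  apply antitoneOn_of_deriv_nonpos (convex_Ici a)
  · exact fun t ht => (hf t ht).continuousAt.continuousWithinAt
  · intro t ht
    rw [interior_Ici] at ht
    exact (hf t ht.le).differentiableAt.differentiableWithinAt
  · intro t ht
    rw [interior_Ici] at ht
    rw [(hf t ht.le).deriv]
    exact h t ht.le

private lemma monoOn_Icc {a b : ℝ} {f f' : ℝ → ℝ}
    (hf : ∀ t ∈ Icc a b, HasDerivAt f (f' t) t)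
    (h : ∀ t ∈ Ioo a b, 0 ≤ f' t) : MonotoneOn f (Icc a b) := by
  apply monotoneOn_of_deriv_nonneg (convex_Icc a b)
  · exact fun t ht => (hf t ht).continuousAt.continuousWithinAt
  · intro t ht
    rw [interior_Icc] at ht
    exact (hf t (Ioo_subset_Icc_self ht)).differentiableAt.differentiableWithinAt
  · intro t ht
    rw [interior_Icc] at ht
    rw [(hf t (Ioo_subset_Icc_self ht)).deriv]
    exact h t ht

private lemma hasDerivAt_exp_affine (k b t : ℝ) :
    HasDerivAt (fun s => Real.exp (k * s + b)) (k * Real.exp (k * t + b)) t := by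
  have h1 : HasDerivAt (fun s : ℝ => k * s + b) k t := by
    simpa using ((hasDerivAt_id t).const_mul k).add_const b
  simpa [mul_comm, Function.comp_def] using (Real.hasDerivAt_exp (k * t + b)).comp t h1

private lemma pos_of_linear {f c : ℝ → ℝ}
    (hc : ContinuousOn c (Ici 0))
    (hf : ∀ t, (0:ℝ) ≤ t → HasDerivAt f (c t * f t) t)
    (h0 : 0 < f 0) : ∀ t, 0 ≤ t → 0 < f t := by
  by_contra hcon
  push_neg at hcon
  obtain ⟨T, hT0, hT⟩ := hcon
  have hfc : ContinuousOn f (Icc 0 T) := fun t ht => (hf t ht.1).continuousAt.continuousWithinAt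
  have hz : ∃ z ∈ Icc 0 T, f z = 0 := by
    have h2 := intermediate_value_Icc' hT0 hfc (⟨hT, h0.le⟩ : (0:ℝ) ∈ Icc (f T) (f 0))
    obtain ⟨z, hz1, hz2⟩ := h2
    exact ⟨z, hz1, hz2⟩
  set S : Set ℝ := Icc 0 T ∩ f ⁻¹' {0} with hS
  have hSclosed : IsClosed S := hfc.preimage_isClosed_of_isClosed isClosed_Icc isClosed_singleton
  have hSne : S.Nonempty := by obtain ⟨z, hz1, hz2⟩ := hz; exact ⟨z, hz1, hz2⟩
  have hSbdd : BddBelow S := ⟨0, fun t ht => ht.1.1⟩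
  have hqS : sInf S ∈ S := hSclosed.csInf_mem hSne hSbdd
  set q := sInf S with hq
  have hq0 : f q = 0 := hqS.2
  have hqIcc : q ∈ Icc 0 T := hqS.1
  have hqpos : 0 < q := by
    rcases hqIcc.1.lt_or_eq with h | h
    · exact h
    · rw [← h] at hq0; linarith
  have hpos : ∀ s, 0 ≤ s → s < q → 0 < f s := by
    intro s hs0 hsq
    by_contra hns
    push_neg at hns
    have hsT : s ≤ T := le_trans hsq.le hqIcc.2
    obtain ⟨z, hzIcc, hz0⟩ := intermediate_value_Icc' hs0
      (hfc.mono (Icc_subset_Icc_right hsT)) (⟨hns, h0.le⟩ : (0:ℝ) ∈ Icc (f s) (f 0))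
    have hzS : z ∈ S := ⟨⟨hzIcc.1, le_trans hzIcc.2 hsT⟩, hz0⟩
    have := csInf_le hSbdd hzS
    have : q ≤ s := le_trans this hzIcc.2
    linarith
  obtain ⟨M, hM⟩ := (isCompact_Icc : IsCompact (Icc (0:ℝ) q)).exists_bound_of_continuousOn
    (hc.mono (Icc_subset_Ici_self))
  set g : ℝ → ℝ := fun t => Real.exp (M * t + 0) * f t with hg
  have hgd : ∀ t ∈ Icc 0 q, HasDerivAt g
      (M * Real.exp (M * t + 0) * f t + Real.exp (M * t + 0) * (c t * f t)) t := by
    intro t ht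
    exact (hasDerivAt_exp_affine M 0 t).mul (hf t ht.1)
  have hmono : MonotoneOn g (Icc 0 q) := by
    apply monoOn_Icc hgd
    intro t ht
    have hft : 0 < f t := hpos t ht.1.le ht.2
    have hMt : |c t| ≤ M := by simpa [Real.norm_eq_abs] using hM t ⟨ht.1.le, ht.2.le⟩
    have hct := abs_le.1 hMt
    have he := Real.exp_pos (M * t + 0)
    nlinarith [mul_nonneg (mul_nonneg he.le hft.le) (show (0:ℝ) ≤ M + c t by linarith)]
  have h1 : g 0 ≤ g q := hmono ⟨le_refl 0, hqpos.le⟩ ⟨hqpos.le, le_refl q⟩ hqpos.le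
  have hg0 : g 0 = f 0 := by simp [hg]
  have hgq : g q = 0 := by simp [hg, hq0]
  rw [hg0, hgq] at h1
  linarith

private lemma nonneg_of_linear {f c : ℝ → ℝ}
    (hc : ContinuousOn c (Ici 0))
    (hf : ∀ t, (0:ℝ) ≤ t → HasDerivAt f (c t * f t) t)
    (h0 : 0 ≤ f 0) : ∀ t, 0 ≤ t → 0 ≤ f t := by
  by_contra hcon
  push_neg at hcon
  obtain ⟨T, hT0, hT⟩ := hcon
  have hfc : ContinuousOn f (Icc 0 T) := fun t ht => (hf t ht.1).continuousAt.continuousWithinAt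
  have hz : ∃ z ∈ Icc 0 T, f z = 0 := by
    have h2 := intermediate_value_Icc' hT0 hfc (⟨hT.le, h0⟩ : (0:ℝ) ∈ Icc (f T) (f 0))
    obtain ⟨z, hz1, hz2⟩ := h2
    exact ⟨z, hz1, hz2⟩
  set S : Set ℝ := Icc 0 T ∩ f ⁻¹' {0} with hS
  have hSclosed : IsClosed S := hfc.preimage_isClosed_of_isClosed isClosed_Icc isClosed_singleton
  have hSne : S.Nonempty := by obtain ⟨z, hz1, hz2⟩ := hz; exact ⟨z, hz1, hz2⟩
  have hSbdd : BddAbove S := ⟨T, fun t ht => ht.1.2⟩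
  have hqS : sSup S ∈ S := hSclosed.csSup_mem hSne hSbdd
  set q := sSup S with hq
  have hq0 : f q = 0 := hqS.2
  have hqIcc : q ∈ Icc 0 T := hqS.1
  have hqT : q < T := by
    rcases hqIcc.2.lt_or_eq with h | h
    · exact h
    · exact absurd (h ▸ hq0) (by intro h2; rw [h2] at hT; exact lt_irrefl 0 hT)
  have hneg : ∀ s, q < s → s ≤ T → f s < 0 := by
    intro s hqs hsT
    by_contra hns
    push_neg at hns
    obtain ⟨z, hzIcc, hz0⟩ := intermediate_value_Icc' hsT
      (hfc.mono (Icc_subset_Icc_left (le_trans hqIcc.1 hqs.le)))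
      (⟨hT.le, hns⟩ : (0:ℝ) ∈ Icc (f T) (f s))
    have hzS : z ∈ S := ⟨⟨le_trans (le_trans hqIcc.1 hqs.le) hzIcc.1, hzIcc.2⟩, hz0⟩
    have h3 := le_csSup hSbdd hzS
    linarith [hzIcc.1]
  obtain ⟨M, hM⟩ := (isCompact_Icc : IsCompact (Icc q T)).exists_bound_of_continuousOn
    (hc.mono (fun t ht => le_trans hqIcc.1 ht.1))
  set g : ℝ → ℝ := fun t => Real.exp (-M * t + 0) * f t with hg
  have hgd : ∀ t ∈ Icc q T, HasDerivAt g
      (-M * Real.exp (-M * t + 0) * f t + Real.exp (-M * t + 0) * (c t * f t)) t := by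
    intro t ht
    exact (hasDerivAt_exp_affine (-M) 0 t).mul (hf t (le_trans hqIcc.1 ht.1))
  have hmono : MonotoneOn g (Icc q T) := by
    apply monoOn_Icc hgd
    intro t ht
    have hft : f t < 0 := hneg t ht.1 ht.2.le
    have hMt : |c t| ≤ M := by simpa [Real.norm_eq_abs] using hM t ⟨ht.1.le, ht.2.le⟩
    have hct := abs_le.1 hMt
    have he := Real.exp_pos (-M * t + 0)
    nlinarith [mul_nonneg (mul_nonneg he.le (neg_nonneg.2 hft.le)) (show (0:ℝ) ≤ M - c t by linarith)]
  have h1 : g q ≤ g T := hmono ⟨le_refl q, hqT.le⟩ ⟨hqT.le, le_refl T⟩ hqT.le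
  have hgq : g q = 0 := by simp [hg, hq0]
  have hgT : g T < 0 := mul_neg_of_pos_of_neg (Real.exp_pos _) hT
  linarith

private lemma decay_bound {a : ℝ} {X : ℝ → ℝ} {k : ℝ}
    (hanti : AntitoneOn (fun s => Real.exp (k * s + 0) * X s) (Ici a)) :
    ∀ t, a ≤ t → X t ≤ Real.exp (-k * t + k * a) * X a := by
  intro t ht
  have h' : Real.exp (k * t + 0) * X t ≤ Real.exp (k * a + 0) * X a :=
    hanti self_mem_Ici ht ht
  have h2 := mul_le_mul_of_nonneg_left h' (Real.exp_pos (-k * t)).le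
  have e1 : Real.exp (-k * t) * (Real.exp (k * t + 0) * X t) = X t := by
    rw [← mul_assoc, ← Real.exp_add, show -k * t + (k * t + 0) = 0 by ring, Real.exp_zero, one_mul]
  have e2 : Real.exp (-k * t) * (Real.exp (k * a + 0) * X a)
      = Real.exp (-k * t + k * a) * X a := by
    rw [← mul_assoc, ← Real.exp_add, show -k * t + (k * a + 0) = -k * t + k * a by ring]
  rw [e1, e2] at h2
  exact h2

private lemma tendsto_exp_decay (k C a : ℝ) (hk : 0 < k) :
    Tendsto (fun t => Real.exp (-k * t + k * a) * C) atTop (𝓝 0) := by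
  have h0 : Tendsto (fun t : ℝ => k * t) atTop atTop := Tendsto.const_mul_atTop hk tendsto_id
  have h2 := tendsto_neg_atTop_atBot.comp h0
  have h3 := tendsto_atBot_add_const_right atTop (k * a) h2
  have h1 : Tendsto (fun t : ℝ => -k * t + k * a) atTop atBot := by
    simpa [Function.comp, neg_mul] using h3
  have h4 := Real.tendsto_exp_atBot.comp h1
  have h5 := h4.mul_const C
  simpa [Function.comp] using h5

set_option maxHeartbeats 1000000 in
theorem lanchester_3d_winner (x₁ x₂ x₃ : ℝ) (hx₁ : 0 < x₁) (hx₂ : 0 < x₂) (hx₃ : 0 < x₃)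
    (X₁ X₂ X₃ : ℝ → ℝ)
    (hX₁ : ∀ t : ℝ, 0 ≤ t → HasDerivAt X₁ (1 / 2 * (-(x₂ * X₂ t) - x₃ * X₃ t) * X₁ t) t)
    (hX₂ : ∀ t : ℝ, 0 ≤ t → HasDerivAt X₂ (1 / 2 * (-(x₁ * X₁ t) - x₃ * X₃ t) * X₂ t) t)
    (hX₃ : ∀ t : ℝ, 0 ≤ t → HasDerivAt X₃ (1 / 2 * (-(x₁ * X₁ t) - x₂ * X₂ t) * X₃ t) t)
    (h10 : 0 < X₁ 0) (h20 : 0 < X₂ 0) (h30 : 0 < X₃ 0)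
    (hord₁ : x₂ * X₂ 0 < x₁ * X₁ 0) (hord₂ : x₃ * X₃ 0 ≤ x₂ * X₂ 0) :
    Tendsto X₂ atTop (𝓝 0) ∧ Tendsto X₃ atTop (𝓝 0) ∧
    ∃ L : ℝ, 0 < L ∧ Tendsto X₁ atTop (𝓝 L) := by
  have cont₁ : ContinuousOn X₁ (Ici 0) := fun t ht => (hX₁ t ht).continuousAt.continuousWithinAt
  have cont₂ : ContinuousOn X₂ (Ici 0) := fun t ht => (hX₂ t ht).continuousAt.continuousWithinAt
  have cont₃ : ContinuousOn X₃ (Ici 0) := fun t ht => (hX₃ t ht).continuousAt.continuousWithinAt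
  -- positivity of all three armies
  have hp₁ : ∀ t, 0 ≤ t → 0 < X₁ t := by
    apply pos_of_linear (c := fun t => 1 / 2 * (-(x₂ * X₂ t) - x₃ * X₃ t)) ?_ hX₁ h10
    exact continuousOn_const.mul
      (((continuousOn_const.mul cont₂).neg).sub (continuousOn_const.mul cont₃))
  have hp₂ : ∀ t, 0 ≤ t → 0 < X₂ t := by
    apply pos_of_linear (c := fun t => 1 / 2 * (-(x₁ * X₁ t) - x₃ * X₃ t)) ?_ hX₂ h20
    exact continuousOn_const.mul
      (((continuousOn_const.mul cont₁).neg).sub (continuousOn_const.mul cont₃))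
  have hp₃ : ∀ t, 0 ≤ t → 0 < X₃ t := by
    apply pos_of_linear (c := fun t => 1 / 2 * (-(x₁ * X₁ t) - x₂ * X₂ t)) ?_ hX₃ h30
    exact continuousOn_const.mul
      (((continuousOn_const.mul cont₁).neg).sub (continuousOn_const.mul cont₂))
  -- derivative of u₁ - u₂
  have hDd : ∀ t, 0 ≤ t → HasDerivAt (fun s => x₁ * X₁ s - x₂ * X₂ s)
      (-(1/2) * (x₃ * X₃ t) * (x₁ * X₁ t - x₂ * X₂ t)) t := by
    intro t ht
    have h := ((hX₁ t ht).const_mul x₁).sub ((hX₂ t ht).const_mul x₂)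
    exact h.congr_deriv (by ring)
  have hD : ∀ t, 0 ≤ t → 0 < x₁ * X₁ t - x₂ * X₂ t := by
    apply pos_of_linear (c := fun s => -(1/2) * (x₃ * X₃ s)) ?_ hDd (by linarith)
    exact continuousOn_const.mul (continuousOn_const.mul cont₃)
  have hEd : ∀ t, 0 ≤ t → HasDerivAt (fun s => x₂ * X₂ s - x₃ * X₃ s)
      (-(1/2) * (x₁ * X₁ t) * (x₂ * X₂ t - x₃ * X₃ t)) t := by
    intro t ht
    have h := ((hX₂ t ht).const_mul x₂).sub ((hX₃ t ht).const_mul x₃)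
    exact h.congr_deriv (by ring)
  have hE : ∀ t, 0 ≤ t → 0 ≤ x₂ * X₂ t - x₃ * X₃ t := by
    apply nonneg_of_linear (c := fun s => -(1/2) * (x₁ * X₁ s)) ?_ hEd (by linarith)
    exact continuousOn_const.mul (continuousOn_const.mul cont₁)
  -- W = u₁ - u₂ - u₃ is nondecreasing
  have hWd : ∀ t, 0 ≤ t → HasDerivAt (fun s => x₁ * X₁ s - x₂ * X₂ s - x₃ * X₃ s)
      ((x₂ * X₂ t) * (x₃ * X₃ t)) t := by
    intro t ht
    have h := (((hX₁ t ht).const_mul x₁).sub ((hX₂ t ht).const_mul x₂)).sub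
      ((hX₃ t ht).const_mul x₃)
    exact h.congr_deriv (by ring)
  have hWmono : MonotoneOn (fun s => x₁ * X₁ s - x₂ * X₂ s - x₃ * X₃ s) (Ici 0) :=
    monoOn_Ici hWd (fun t ht =>
      mul_nonneg (mul_pos hx₂ (hp₂ t ht)).le (mul_pos hx₃ (hp₃ t ht)).le)
  -- X₁ is nonincreasing
  have hanti₁ : AntitoneOn X₁ (Ici 0) := by
    apply antiOn_Ici (fun t ht => hX₁ t ht)
    intro t ht
    nlinarith [hp₁ t ht, mul_pos hx₂ (hp₂ t ht), mul_pos hx₃ (hp₃ t ht)]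
  -- key: eventually u₁ > u₂ + u₃
  have hex : ∃ t₀, 0 ≤ t₀ ∧ x₂ * X₂ t₀ + x₃ * X₃ t₀ < x₁ * X₁ t₀ := by
    by_contra hcon
    push_neg at hcon
    obtain ⟨k₁, hk₁def⟩ : ∃ k₁ : ℝ, k₁ = (x₁ * X₁ 0)⁻¹ := ⟨_, rfl⟩
    obtain ⟨k₃, hk₃def⟩ : ∃ k₃ : ℝ, k₃ = (x₃ * X₃ 0)⁻¹ := ⟨_, rfl⟩
    have hk₁p : 0 < k₁ := by rw [hk₁def]; exact inv_pos.2 (mul_pos hx₁ h10)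
    have hk₃p : 0 < k₃ := by rw [hk₃def]; exact inv_pos.2 (mul_pos hx₃ h30)
    -- (a) upper bound on u₁ : (u₁ t)⁻¹ ≥ t/2 + k₁
    have hAmono : MonotoneOn (fun s => (x₁ * X₁ s)⁻¹ - s / 2) (Ici 0) := by
      apply monoOn_Ici (f' := fun t =>
        -(x₁ * (1 / 2 * (-(x₂ * X₂ t) - x₃ * X₃ t) * X₁ t)) / (x₁ * X₁ t) ^ 2 - 1 / 2)
      · intro t ht
        exact (((hX₁ t ht).const_mul x₁).inv
          (ne_of_gt (mul_pos hx₁ (hp₁ t ht)))).sub ((hasDerivAt_id t).div_const 2)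
      · intro t ht
        have hu₁ := mul_pos hx₁ (hp₁ t ht)
        have heq : -(x₁ * (1 / 2 * (-(x₂ * X₂ t) - x₃ * X₃ t) * X₁ t)) / (x₁ * X₁ t) ^ 2 - 1 / 2
            = ((x₂ * X₂ t + x₃ * X₃ t) - x₁ * X₁ t) / (2 * (x₁ * X₁ t)) := by
          have := (hp₁ t ht).ne'
          field_simp
          ring
        rw [heq]
        exact div_nonneg (by linarith [hcon t ht]) (by linarith)
    have hu₁inv : ∀ t, 0 ≤ t → t / 2 + k₁ ≤ (x₁ * X₁ t)⁻¹ := by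
      intro t ht
      have h' : (x₁ * X₁ 0)⁻¹ - 0 / 2 ≤ (x₁ * X₁ t)⁻¹ - t / 2 :=
        hAmono self_mem_Ici (mem_Ici.2 ht) ht
      rw [hk₁def]
      linarith
    -- (b) upper bound on u₃ : u₃ t * (k₃ + t) ≤ 1
    have hBmono : MonotoneOn (fun s => (x₃ * X₃ s)⁻¹ - s) (Ici 0) := by
      apply monoOn_Ici (f' := fun t =>
        -(x₃ * (1 / 2 * (-(x₁ * X₁ t) - x₂ * X₂ t) * X₃ t)) / (x₃ * X₃ t) ^ 2 - 1)
      · intro t ht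
        exact (((hX₃ t ht).const_mul x₃).inv
          (ne_of_gt (mul_pos hx₃ (hp₃ t ht)))).sub (hasDerivAt_id t)
      · intro t ht
        have hu₃ := mul_pos hx₃ (hp₃ t ht)
        have h23 := hE t ht
        have h12 := hD t ht
        have heq : -(x₃ * (1 / 2 * (-(x₁ * X₁ t) - x₂ * X₂ t) * X₃ t)) / (x₃ * X₃ t) ^ 2 - 1
            = ((x₁ * X₁ t + x₂ * X₂ t) - 2 * (x₃ * X₃ t)) / (2 * (x₃ * X₃ t)) := by
          have := (hp₃ t ht).ne'
          field_simp
          ring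
        rw [heq]
        exact div_nonneg (by linarith) (by linarith)
    have hu₃bd : ∀ t, 0 ≤ t → (x₃ * X₃ t) * (k₃ + t) ≤ 1 := by
      intro t ht
      have h1' : (x₃ * X₃ 0)⁻¹ - 0 ≤ (x₃ * X₃ t)⁻¹ - t :=
        hBmono self_mem_Ici (mem_Ici.2 ht) ht
      have hu₃ := mul_pos hx₃ (hp₃ t ht)
      have h2 : k₃ + t ≤ (x₃ * X₃ t)⁻¹ := by rw [hk₃def]; linarith
      calc (x₃ * X₃ t) * (k₃ + t) ≤ (x₃ * X₃ t) * (x₃ * X₃ t)⁻¹ :=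
            mul_le_mul_of_nonneg_left h2 hu₃.le
        _ = 1 := mul_inv_cancel₀ hu₃.ne'
    -- (c) lower bound on D = u₁ - u₂ : D t ^ 2 * (k₃ + t) nondecreasing
    have hCmono : MonotoneOn (fun s => (x₁ * X₁ s - x₂ * X₂ s) ^ 2 * (k₃ + s)) (Ici 0) := by
      apply monoOn_Ici (f' := fun t =>
        (x₁ * X₁ t - x₂ * X₂ t) ^ 2 * (1 - (x₃ * X₃ t) * (k₃ + t)))
      · intro t ht
        have h := ((hDd t ht).pow 2).mul ((hasDerivAt_id t).const_add k₃)
        exact h.congr_deriv (by simp only [id_eq, Pi.pow_apply]; push_cast; ring)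
      · intro t ht
        exact mul_nonneg (sq_nonneg _) (by linarith [hu₃bd t ht])
    -- final contradiction at a large time T
    obtain ⟨β, hβdef⟩ : ∃ β : ℝ, β = (x₁ * X₁ 0 - x₂ * X₂ 0) ^ 2 * k₃ := ⟨_, rfl⟩
    have hβp : 0 < β := by rw [hβdef]; exact mul_pos (pow_pos (by linarith) 2) hk₃p
    obtain ⟨T, hTdef⟩ : ∃ T : ℝ, T = max 1 (8 * (k₃ + 1) / β) := ⟨_, rfl⟩
    have hT1 : (1:ℝ) ≤ T := hTdef ▸ le_max_left _ _
    have hT0 : (0:ℝ) ≤ T := by linarith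
    have hTβ : 8 * (k₃ + 1) / β ≤ T := hTdef ▸ le_max_right _ _
    have h1 : β ≤ (x₁ * X₁ T - x₂ * X₂ T) ^ 2 * (k₃ + T) := by
      have h' : (x₁ * X₁ 0 - x₂ * X₂ 0) ^ 2 * (k₃ + 0)
          ≤ (x₁ * X₁ T - x₂ * X₂ T) ^ 2 * (k₃ + T) :=
        hCmono self_mem_Ici (mem_Ici.2 hT0) hT0
      rw [hβdef]
      linarith [h']
    have hDT := hD T hT0
    have hu₂T := mul_pos hx₂ (hp₂ T hT0)
    have hu₁T := mul_pos hx₁ (hp₁ T hT0)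
    have h3 := hu₁inv T hT0
    have h4 : (x₁ * X₁ T) * T ≤ 2 := by
      have h5 : (x₁ * X₁ T) * (T / 2 + k₁) ≤ (x₁ * X₁ T) * (x₁ * X₁ T)⁻¹ :=
        mul_le_mul_of_nonneg_left h3 hu₁T.le
      rw [mul_inv_cancel₀ hu₁T.ne'] at h5
      nlinarith
    have h6 : (x₁ * X₁ T - x₂ * X₂ T) ^ 2 * (k₃ + T) ≤ (x₁ * X₁ T) ^ 2 * (k₃ + T) := by
      have hkT : (0:ℝ) < k₃ + T := by linarith
      have hDle : x₁ * X₁ T - x₂ * X₂ T ≤ x₁ * X₁ T := by linarith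
      exact mul_le_mul_of_nonneg_right (pow_le_pow_left₀ hDT.le hDle 2) hkT.le
    have h7 : k₃ + T ≤ (k₃ + 1) * T := by
      have := mul_le_mul_of_nonneg_left hT1 hk₃p.le
      nlinarith
    have h8 : (x₁ * X₁ T) ^ 2 * T ^ 2 ≤ 4 := by
      nlinarith [mul_le_mul h4 h4 (mul_nonneg hu₁T.le hT0) (by norm_num : (0:ℝ) ≤ 2)]
    have h9a : β * T ≤ (x₁ * X₁ T) ^ 2 * (k₃ + T) * T :=
      mul_le_mul_of_nonneg_right (le_trans h1 h6) hT0
    have h9b : (x₁ * X₁ T) ^ 2 * (k₃ + T) * T ≤ (x₁ * X₁ T) ^ 2 * ((k₃ + 1) * T) * T := by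
      nlinarith [mul_le_mul_of_nonneg_left h7 (mul_nonneg (sq_nonneg (x₁ * X₁ T)) hT0)]
    have h9c : (x₁ * X₁ T) ^ 2 * ((k₃ + 1) * T) * T = (k₃ + 1) * ((x₁ * X₁ T) ^ 2 * T ^ 2) := by
      ring
    have h9d : (k₃ + 1) * ((x₁ * X₁ T) ^ 2 * T ^ 2) ≤ (k₃ + 1) * 4 :=
      mul_le_mul_of_nonneg_left h8 (by linarith)
    have h10' : 8 * (k₃ + 1) ≤ β * T := by
      rw [div_le_iff₀ hβp] at hTβ
      linarith
    linarith [h9a, h9b, h9c ▸ h9d]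
  obtain ⟨t₀, ht₀0, ht₀⟩ := hex
  -- uniform lower bound on u₁ past t₀
  obtain ⟨ε, hε, hu₁lb⟩ : ∃ ε : ℝ, 0 < ε ∧ ∀ t, t₀ ≤ t → ε ≤ x₁ * X₁ t := by
    refine ⟨x₁ * X₁ t₀ - x₂ * X₂ t₀ - x₃ * X₃ t₀, by linarith, ?_⟩
    intro t ht
    have ht0 : (0:ℝ) ≤ t := le_trans ht₀0 ht
    have h1 : x₁ * X₁ t₀ - x₂ * X₂ t₀ - x₃ * X₃ t₀ ≤ x₁ * X₁ t - x₂ * X₂ t - x₃ * X₃ t :=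
      hWmono (mem_Ici.2 ht₀0) (mem_Ici.2 ht0) ht
    have h2 := mul_pos hx₂ (hp₂ t ht0)
    have h3 := mul_pos hx₃ (hp₃ t ht0)
    linarith
  -- exponential decay of X₂
  have hdec₂ : ∀ t, t₀ ≤ t → X₂ t ≤ Real.exp (-(ε/2) * t + (ε/2) * t₀) * X₂ t₀ := by
    apply decay_bound
    apply antiOn_Ici (f' := fun t => (ε/2) * Real.exp ((ε/2) * t + 0) * X₂ t
        + Real.exp ((ε/2) * t + 0) * (1 / 2 * (-(x₁ * X₁ t) - x₃ * X₃ t) * X₂ t))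
    · intro t ht
      exact (hasDerivAt_exp_affine (ε/2) 0 t).mul (hX₂ t (le_trans ht₀0 ht))
    · intro t ht
      have ht0 : (0:ℝ) ≤ t := le_trans ht₀0 ht
      have h1 := hu₁lb t ht
      have h2 := mul_pos hx₃ (hp₃ t ht0)
      have h3 := hp₂ t ht0
      have he := Real.exp_pos ((ε/2) * t + 0)
      nlinarith [mul_nonneg (mul_nonneg he.le h3.le)
        (show (0:ℝ) ≤ (x₁ * X₁ t + x₃ * X₃ t) - ε by linarith)]
  -- exponential decay of X₃
  have hdec₃ : ∀ t, t₀ ≤ t → X₃ t ≤ Real.exp (-(ε/2) * t + (ε/2) * t₀) * X₃ t₀ := by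
    apply decay_bound
    apply antiOn_Ici (f' := fun t => (ε/2) * Real.exp ((ε/2) * t + 0) * X₃ t
        + Real.exp ((ε/2) * t + 0) * (1 / 2 * (-(x₁ * X₁ t) - x₂ * X₂ t) * X₃ t))
    · intro t ht
      exact (hasDerivAt_exp_affine (ε/2) 0 t).mul (hX₃ t (le_trans ht₀0 ht))
    · intro t ht
      have ht0 : (0:ℝ) ≤ t := le_trans ht₀0 ht
      have h1 := hu₁lb t ht
      have h2 := mul_pos hx₂ (hp₂ t ht0)
      have h3 := hp₃ t ht0
      have he := Real.exp_pos ((ε/2) * t + 0)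
      nlinarith [mul_nonneg (mul_nonneg he.le h3.le)
        (show (0:ℝ) ≤ (x₁ * X₁ t + x₂ * X₂ t) - ε by linarith)]
  have hX₂tend : Tendsto X₂ atTop (𝓝 0) := by
    apply tendsto_of_tendsto_of_tendsto_of_le_of_le' tendsto_const_nhds
      (tendsto_exp_decay (ε/2) (X₂ t₀) t₀ (half_pos hε))
    · filter_upwards [eventually_ge_atTop (0:ℝ)] with t ht using (hp₂ t ht).le
    · filter_upwards [eventually_ge_atTop t₀] with t ht using hdec₂ t ht
  have hX₃tend : Tendsto X₃ atTop (𝓝 0) := by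
    apply tendsto_of_tendsto_of_tendsto_of_le_of_le' tendsto_const_nhds
      (tendsto_exp_decay (ε/2) (X₃ t₀) t₀ (half_pos hε))
    · filter_upwards [eventually_ge_atTop (0:ℝ)] with t ht using (hp₃ t ht).le
    · filter_upwards [eventually_ge_atTop t₀] with t ht using hdec₃ t ht
  refine ⟨hX₂tend, hX₃tend, ?_⟩
  -- lower bound for X₁
  obtain ⟨K, hKp, hKub⟩ : ∃ K : ℝ, 0 < K ∧ ∀ t, t₀ ≤ t →
      x₂ * X₂ t + x₃ * X₃ t ≤ K * Real.exp (-(ε/2) * t + (ε/2) * t₀) := by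
    refine ⟨x₂ * X₂ t₀ + x₃ * X₃ t₀,
      add_pos (mul_pos hx₂ (hp₂ t₀ ht₀0)) (mul_pos hx₃ (hp₃ t₀ ht₀0)), ?_⟩
    intro t ht
    have h2 := mul_le_mul_of_nonneg_left (hdec₂ t ht) hx₂.le
    have h3 := mul_le_mul_of_nonneg_left (hdec₃ t ht) hx₃.le
    nlinarith [Real.exp_pos (-(ε/2) * t + (ε/2) * t₀)]
  have hgmono : MonotoneOn
      (fun s => X₁ s * Real.exp (-(K/ε) * Real.exp (-(ε/2) * s + (ε/2) * t₀))) (Ici t₀) := by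
    apply monoOn_Ici (f' := fun t =>
      1 / 2 * (-(x₂ * X₂ t) - x₃ * X₃ t) * X₁ t
        * Real.exp (-(K/ε) * Real.exp (-(ε/2) * t + (ε/2) * t₀))
      + X₁ t * (Real.exp (-(K/ε) * Real.exp (-(ε/2) * t + (ε/2) * t₀))
        * (-(K/ε) * (-(ε/2) * Real.exp (-(ε/2) * t + (ε/2) * t₀)))))
    · intro t ht
      have hP : HasDerivAt (fun s => -(K/ε) * Real.exp (-(ε/2) * s + (ε/2) * t₀))
          (-(K/ε) * (-(ε/2) * Real.exp (-(ε/2) * t + (ε/2) * t₀))) t :=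
        (hasDerivAt_exp_affine (-(ε/2)) ((ε/2) * t₀) t).const_mul (-(K/ε))
      exact (hX₁ t (le_trans ht₀0 ht)).mul
        hP.exp
    · intro t ht
      have ht0 : (0:ℝ) ≤ t := le_trans ht₀0 ht
      have hub := hKub t ht
      have he₂ := Real.exp_pos (-(ε/2) * t + (ε/2) * t₀)
      have heP := Real.exp_pos (-(K/ε) * Real.exp (-(ε/2) * t + (ε/2) * t₀))
      have hX := hp₁ t ht0
      have hKε2 : -(K/ε) * (-(ε/2) * Real.exp (-(ε/2) * t + (ε/2) * t₀))
          = K/2 * Real.exp (-(ε/2) * t + (ε/2) * t₀) := by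
        field_simp
      rw [hKε2]
      nlinarith [mul_nonneg (mul_pos heP hX).le
        (show (0:ℝ) ≤ K * Real.exp (-(ε/2) * t + (ε/2) * t₀) - (x₂ * X₂ t + x₃ * X₃ t)
          by linarith)]
  have hlb : ∀ t, 0 ≤ t → X₁ t₀ * Real.exp (-(K/ε)) ≤ X₁ t := by
    intro t ht
    have hexp1 : Real.exp (-(K/ε)) ≤ 1 := by
      rw [← Real.exp_zero]
      exact Real.exp_le_exp.2 (by rw [neg_nonpos]; positivity)
    rcases le_total t t₀ with h | h
    · have h1 := hanti₁ (mem_Ici.2 ht) (mem_Ici.2 ht₀0) h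
      nlinarith [hp₁ t₀ ht₀0]
    · have h1 : X₁ t₀ * Real.exp (-(K/ε) * Real.exp (-(ε/2) * t₀ + (ε/2) * t₀))
          ≤ X₁ t * Real.exp (-(K/ε) * Real.exp (-(ε/2) * t + (ε/2) * t₀)) :=
        hgmono self_mem_Ici (mem_Ici.2 h) h
      rw [show -(ε/2) * t₀ + (ε/2) * t₀ = 0 by ring, Real.exp_zero, mul_one] at h1
      have hPt : -(K/ε) * Real.exp (-(ε/2) * t + (ε/2) * t₀) ≤ 0 := by
        have he₂ := Real.exp_pos (-(ε/2) * t + (ε/2) * t₀)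
        have : (0:ℝ) ≤ K/ε := by positivity
        nlinarith
      have h2 : Real.exp (-(K/ε) * Real.exp (-(ε/2) * t + (ε/2) * t₀)) ≤ 1 := by
        rw [← Real.exp_zero]
        exact Real.exp_le_exp.2 hPt
      nlinarith [hp₁ t ht]
  refine ⟨⨅ t, X₁ (max t 0), ?_, ?_⟩
  · have hc₀p : 0 < X₁ t₀ * Real.exp (-(K/ε)) := mul_pos (hp₁ t₀ ht₀0) (Real.exp_pos _)
    exact lt_of_lt_of_le hc₀p (le_ciInf (fun t => hlb _ (le_max_right t 0)))
  · have hYanti : Antitone (fun t => X₁ (max t 0)) := fun s t hst =>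
      hanti₁ (mem_Ici.2 (le_max_right s 0)) (mem_Ici.2 (le_max_right t 0))
        (max_le_max hst (le_refl 0))
    have hbdd : BddBelow (Set.range (fun t => X₁ (max t 0))) := by
      refine ⟨X₁ t₀ * Real.exp (-(K/ε)), ?_⟩
      rintro y ⟨t, rfl⟩
      exact hlb _ (le_max_right t 0)
    have hYtend := tendsto_atTop_ciInf hYanti hbdd
    apply Filter.Tendsto.congr' ?_ hYtend
    filter_upwards [eventually_ge_atTop (0:ℝ)] with t ht
    simp only [max_eq_left ht]
end

section
/- Along solutions of the 3D army-of-one unaimed system X₁' = (-x₂X₂ - x₃X₃)X₁, X₂' = -½x₁X₁X₂, X₃' = -½x₁X₁X₃, the quantity x₁X₁(t) - 2(x₂X₂(t) + x₃X₃(t)) is constant in time. -/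
theorem lanchester_army_of_one_3d_invariant (x₁ x₂ x₃ : ℝ)
    (hx₁ : 0 < x₁) (hx₂ : 0 < x₂) (hx₃ : 0 < x₃)
    (X₁ X₂ X₃ : ℝ → ℝ)
    (hX₁ : ∀ t : ℝ, HasDerivAt X₁ ((-(x₂ * X₂ t) - x₃ * X₃ t) * X₁ t) t)
    (hX₂ : ∀ t : ℝ, HasDerivAt X₂ (-(1 / 2 * x₁ * X₁ t * X₂ t)) t)
    (hX₃ : ∀ t : ℝ, HasDerivAt X₃ (-(1 / 2 * x₁ * X₁ t * X₃ t)) t) :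
    ∀ t : ℝ, x₁ * X₁ t - 2 * (x₂ * X₂ t + x₃ * X₃ t)
      = x₁ * X₁ 0 - 2 * (x₂ * X₂ 0 + x₃ * X₃ 0) := by
  have key : ∀ t : ℝ, HasDerivAt (fun t => x₁ * X₁ t - 2 * (x₂ * X₂ t + x₃ * X₃ t)) 0 t := by
    intro t
    have h := (((hX₁ t).const_mul x₁).sub
      ((((hX₂ t).const_mul x₂).add ((hX₃ t).const_mul x₃)).const_mul 2))
    refine h.congr_deriv ?_
    ring
  intro t
  exact is_const_of_deriv_eq_zero (fun t => ((key t).differentiableAt))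
    (fun t => (key t).deriv) t 0
end

section
/- Along solutions of the n-dimensional army-of-one unaimed system X₁' = (-∑_{i=2}^n xᵢXᵢ)X₁ and Xⱼ' = -(x₁/(n-1))X₁Xⱼ for j = 2, …, n, the quantity x₁X₁(t) - (n-1)·∑_{i=2}^n xᵢXᵢ(t) is constant in time. -/
theorem lanchester_army_of_one_invariant (n : ℕ) (hn : 2 ≤ n)
    (x : ℕ → ℝ) (X : ℕ → ℝ → ℝ)
    (hx : ∀ i, 1 ≤ i → i ≤ n → 0 < x i)
    (hX₁ : ∀ t : ℝ, HasDerivAt (X 1)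
      ((-(∑ i ∈ Finset.Icc 2 n, x i * X i t)) * X 1 t) t)
    (hXj : ∀ j, 2 ≤ j → j ≤ n → ∀ t : ℝ,
      HasDerivAt (X j) (-(x 1 / ((n : ℝ) - 1)) * X 1 t * X j t) t) :
    ∀ t : ℝ, x 1 * X 1 t - ((n : ℝ) - 1) * ∑ i ∈ Finset.Icc 2 n, x i * X i t
      = x 1 * X 1 0 - ((n : ℝ) - 1) * ∑ i ∈ Finset.Icc 2 n, x i * X i 0 := by
  have hne : ((n : ℝ) - 1) ≠ 0 := by
    have : (2 : ℝ) ≤ (n : ℝ) := by exact_mod_cast hn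
    linarith
  set F : ℝ → ℝ := fun t =>
    x 1 * X 1 t - ((n : ℝ) - 1) * ∑ i ∈ Finset.Icc 2 n, x i * X i t with hF
  have hF' : ∀ t, HasDerivAt F 0 t := by
    intro t
    have hsum : HasDerivAt (fun t => ∑ i ∈ Finset.Icc 2 n, x i * X i t)
        (∑ i ∈ Finset.Icc 2 n, x i * (-(x 1 / ((n : ℝ) - 1)) * X 1 t * X i t)) t := by
      apply HasDerivAt.fun_sum
      intro i hi
      simp only [Finset.mem_Icc] at hi
      exact (hXj i hi.1 hi.2 t).const_mul (x i)
    have h := ((hX₁ t).const_mul (x 1)).fun_sub (hsum.const_mul ((n : ℝ) - 1))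
    refine (h : HasDerivAt F _ t).congr_deriv ?_
    have : ∑ i ∈ Finset.Icc 2 n, x i * (-(x 1 / ((n : ℝ) - 1)) * X 1 t * X i t)
        = -(x 1 / ((n : ℝ) - 1)) * X 1 t * ∑ i ∈ Finset.Icc 2 n, x i * X i t := by
      rw [Finset.mul_sum]; apply Finset.sum_congr rfl; intro i _; ring
    rw [this]
    field_simp
    ring
  intro t
  have : F t = F 0 := by
    have : ∀ s, F s = F 0 := fun s =>
      is_const_of_deriv_eq_zero (fun u => (hF' u).differentiableAt)
        (fun u => (hF' u).deriv) s 0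
    exact this t
  simpa [hF] using this
end

section
/- In the n-dimensional army-of-one unaimed system, if the conserved quantity K = x₁X₁(0) - (n-1)·∑_{i=2}^n xᵢXᵢ(0) is positive and all initial data are positive, then every Xⱼ(t) with j ≥ 2 tends to 0 as t → +∞, and X₁(t) converges to a strictly positive limit. -/
open Filter Topology

/-- A solution of the linear ODE `f' = a·f` with positive initial condition stays
positive for `t ≥ 0`. -/
lemma pos_of_linear_ode (f a : ℝ → ℝ) (ha : Continuous a)
    (hf : ∀ t, 0 ≤ t → HasDerivAt f (a t * f t) t) (h0 : 0 < f 0) :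
    ∀ t, 0 ≤ t → 0 < f t := by
  intro T hT
  set F : ℝ → ℝ := fun t => ∫ s in (0:ℝ)..t, a s with hFdef
  have hF : ∀ t : ℝ, HasDerivAt F (a t) t := fun t =>
    intervalIntegral.integral_hasDerivAt_right (ha.intervalIntegrable _ _)
      (ha.stronglyMeasurableAtFilter _ _) ha.continuousAt
  set G : ℝ → ℝ := fun t => f t * Real.exp (-F t) with hGdef
  have hG : ∀ t, 0 ≤ t → HasDerivAt G 0 t := by
    intro t ht
    have h1 : HasDerivAt G (a t * f t * Real.exp (-F t) + f t * (Real.exp (-F t) * -a t)) t :=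
      (hf t ht).mul ((hF t).neg.exp)
    convert h1 using 1
    ring
  have key : G T = G 0 := by
    have := constant_of_has_deriv_right_zero
      (f := G) (a := 0) (b := T)
      (fun s hs => ((hG s hs.1).continuousAt).continuousWithinAt)
      (fun s hs => (hG s hs.1).hasDerivWithinAt)
    exact this T (Set.mem_Icc.2 ⟨hT, le_refl T⟩)
  have hF0 : F 0 = 0 := intervalIntegral.integral_same
  have hG0 : G 0 = f 0 := by simp [hGdef, hF0]
  have hGT : f T * Real.exp (-F T) = f 0 := by rw [← hG0]; exact key
  nlinarith [Real.exp_pos (-F T), h0]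

theorem lanchester_army_of_one_X1_wins (n : ℕ) (hn : 2 ≤ n)
    (x : ℕ → ℝ) (X : ℕ → ℝ → ℝ)
    (hx : ∀ i, 1 ≤ i → i ≤ n → 0 < x i)
    (hX0 : ∀ i, 1 ≤ i → i ≤ n → 0 < X i 0)
    (hX₁ : ∀ t : ℝ, 0 ≤ t → HasDerivAt (X 1)
      ((-(∑ i ∈ Finset.Icc 2 n, x i * X i t)) * X 1 t) t)
    (hXj : ∀ j, 2 ≤ j → j ≤ n → ∀ t : ℝ, 0 ≤ t →
      HasDerivAt (X j) (-(x 1 / ((n : ℝ) - 1)) * X 1 t * X j t) t)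
    (hK : 0 < x 1 * X 1 0 - ((n : ℝ) - 1) * ∑ i ∈ Finset.Icc 2 n, x i * X i 0) :
    (∀ j, 2 ≤ j → j ≤ n → Tendsto (X j) atTop (𝓝 0)) ∧
    ∃ L : ℝ, 0 < L ∧ Tendsto (X 1) atTop (𝓝 L) := by
  have hn1 : (1:ℝ) ≤ (n:ℝ) - 1 := by
    have : (2:ℝ) ≤ (n:ℝ) := by exact_mod_cast hn
    linarith
  have hn1' : (0:ℝ) < (n:ℝ) - 1 := by linarith
  have hx1 : 0 < x 1 := hx 1 le_rfl (le_trans one_le_two hn)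
  obtain ⟨c, hc⟩ : ∃ c : ℝ, c = x 1 / ((n:ℝ) - 1) := ⟨_, rfl⟩
  have hcpos : 0 < c := by rw [hc]; exact div_pos hx1 hn1'
  obtain ⟨Z, hZ⟩ : ∃ Z : ℝ → ℝ, Z = fun t => ∑ i ∈ Finset.Icc 2 n, x i * X i t := ⟨_, rfl⟩
  obtain ⟨K, hKdef⟩ : ∃ K : ℝ, K = x 1 * X 1 0 - ((n : ℝ) - 1) * Z 0 := ⟨_, rfl⟩
  have hKpos : 0 < K := by rw [hKdef, hZ]; exact hK
  -- continuity of X 1 on [0,∞)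
  have hX1cont : ∀ t : ℝ, 0 ≤ t → ContinuousAt (X 1) t :=
    fun t ht => (hX₁ t ht).continuousAt
  -- each X j > 0 on [0,∞) for j ∈ [2,n]
  have hXjpos : ∀ j, 2 ≤ j → j ≤ n → ∀ t, 0 ≤ t → 0 < X j t := by
    intro j hj2 hjn
    apply pos_of_linear_ode (X j) (fun t => -c * X 1 (max t 0))
    · apply Continuous.mul continuous_const
      refine continuous_iff_continuousAt.2 fun t => ?_
      exact ContinuousAt.comp (hX1cont (max t 0) (le_max_right _ _))
        ((continuous_id.max continuous_const).continuousAt :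
          ContinuousAt (fun b : ℝ => max b 0) t)
    · intro t ht
      have h1 := hXj j hj2 hjn t ht
      simpa [max_eq_left ht, ← hc] using h1
    · exact hX0 j (le_trans one_le_two hj2) hjn
  have hZpos : ∀ t, 0 ≤ t → 0 < Z t := by
    intro t ht
    rw [hZ]
    apply Finset.sum_pos
    · intro i hi
      rw [Finset.mem_Icc] at hi
      exact mul_pos (hx i (le_trans one_le_two hi.1) hi.2)
        (hXjpos i hi.1 hi.2 t ht)
    · exact ⟨2, Finset.mem_Icc.2 ⟨le_rfl, hn⟩⟩
  -- derivative of Z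
  have hZder : ∀ t, 0 ≤ t → HasDerivAt Z (-c * X 1 t * Z t) t := by
    intro t ht
    have h1 : HasDerivAt (fun t => ∑ i ∈ Finset.Icc 2 n, x i * X i t)
        (∑ i ∈ Finset.Icc 2 n, x i * (-(x 1 / ((n : ℝ) - 1)) * X 1 t * X i t)) t := by
      apply HasDerivAt.fun_sum
      intro i hi
      rw [Finset.mem_Icc] at hi
      exact (hXj i hi.1 hi.2 t ht).const_mul (x i)
    have h3 : HasDerivAt Z
        (∑ i ∈ Finset.Icc 2 n, x i * (-(x 1 / ((n : ℝ) - 1)) * X 1 t * X i t)) t := by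
      rw [hZ]; exact h1
    convert h3 using 1
    rw [hZ, hc, Finset.mul_sum]
    exact Finset.sum_congr rfl fun i _ => by ring
  -- conservation: x 1 * X 1 t - (n-1) * Z t = K for all t ≥ 0
  have hcons : ∀ t, 0 ≤ t → x 1 * X 1 t - ((n:ℝ) - 1) * Z t = K := by
    intro T hT
    have hWder : ∀ t, 0 ≤ t →
        HasDerivAt (fun t => x 1 * X 1 t - ((n:ℝ) - 1) * Z t) 0 t := by
      intro t ht
      have h2 : HasDerivAt (X 1) ((-(Z t)) * X 1 t) t := by
        have := hX₁ t ht; rw [hZ]; exact this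
      have h1 : HasDerivAt (fun t => x 1 * X 1 t - ((n:ℝ) - 1) * Z t)
          (x 1 * (-Z t * X 1 t) - ((n:ℝ) - 1) * (-c * X 1 t * Z t)) t :=
        (h2.const_mul (x 1)).sub ((hZder t ht).const_mul ((n:ℝ) - 1))
      convert h1 using 1
      rw [hc]
      field_simp
      ring
    have := constant_of_has_deriv_right_zero
      (f := fun t => x 1 * X 1 t - ((n:ℝ) - 1) * Z t) (a := 0) (b := T)
      (fun s hs => ((hWder s hs.1).continuousAt).continuousWithinAt)
      (fun s hs => (hWder s hs.1).hasDerivWithinAt)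
    have h3 := this T (Set.mem_Icc.2 ⟨hT, le_rfl⟩)
    rw [h3, hKdef]
  -- lower bound for X 1
  have hX1lb : ∀ t, 0 ≤ t → K / x 1 ≤ X 1 t := by
    intro t ht
    have h1 := hcons t ht
    have h2 : 0 < Z t := hZpos t ht
    rw [div_le_iff₀ hx1]
    nlinarith
  obtain ⟨lam, hlam⟩ : ∃ lam : ℝ, lam = K / ((n:ℝ) - 1) := ⟨_, rfl⟩
  have hlampos : 0 < lam := by rw [hlam]; exact div_pos hKpos hn1'
  -- Y = Z · exp(lam t) is antitone on [0,∞)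
  have hexp : ∀ t : ℝ, HasDerivAt (fun s => Real.exp (lam * s))
      (Real.exp (lam * t) * lam) t := by
    intro t
    simpa using ((hasDerivAt_id t).const_mul lam).exp
  have hYder : ∀ t, 0 ≤ t →
      HasDerivAt (fun t => Z t * Real.exp (lam * t))
        (Real.exp (lam * t) * Z t * (lam - c * X 1 t)) t := by
    intro t ht
    have h1 : HasDerivAt (fun t => Z t * Real.exp (lam * t))
        (-c * X 1 t * Z t * Real.exp (lam * t) + Z t * (Real.exp (lam * t) * lam)) t :=
      (hZder t ht).mul (hexp t)
    convert h1 using 1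
    ring
  have hYanti : AntitoneOn (fun t => Z t * Real.exp (lam * t)) (Set.Ici (0:ℝ)) := by
    apply antitoneOn_of_deriv_nonpos (convex_Ici 0)
    · exact fun s hs => ((hYder s hs).continuousAt).continuousWithinAt
    · intro s hs
      rw [interior_Ici] at hs
      exact ((hYder s (le_of_lt hs)).differentiableAt).differentiableWithinAt
    · intro s hs
      rw [interior_Ici] at hs
      rw [(hYder s (le_of_lt hs)).deriv]
      have h1 : lam - c * X 1 s ≤ 0 := by
        have h2 : K / x 1 ≤ X 1 s := hX1lb s (le_of_lt hs)
        have h3 : c * (K / x 1) ≤ c * X 1 s :=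
          mul_le_mul_of_nonneg_left h2 (le_of_lt hcpos)
        have h4 : c * (K / x 1) = lam := by
          rw [hc, hlam]
          field_simp
        linarith
      have h2 := (hZpos s (le_of_lt hs)).le
      have h3 := (Real.exp_pos (lam * s)).le
      have h5 := mul_nonpos_of_nonneg_of_nonpos (mul_nonneg h3 h2) h1
      linarith
  have hZbound : ∀ t, 0 ≤ t → Z t ≤ Z 0 * Real.exp (-(lam * t)) := by
    intro t ht
    have h1 := hYanti (Set.mem_Ici.2 le_rfl) (Set.mem_Ici.2 ht) ht
    simp only [mul_zero, Real.exp_zero, mul_one] at h1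
    rw [Real.exp_neg, mul_comm (Z 0), ← div_eq_inv_mul, le_div_iff₀ (Real.exp_pos _)]
    linarith
  -- Z → 0
  have hZtendsto : Tendsto Z atTop (𝓝 0) := by
    have hlin : Tendsto (fun t : ℝ => -(lam * t)) atTop atBot := by
      have h1 : Tendsto (fun t : ℝ => lam * t) atTop atTop :=
        Tendsto.const_mul_atTop hlampos tendsto_id
      exact tendsto_neg_atTop_atBot.comp h1
    have hub : Tendsto (fun t : ℝ => Z 0 * Real.exp (-(lam * t))) atTop (𝓝 (Z 0 * 0)) :=
      (Real.tendsto_exp_atBot.comp hlin).const_mul _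
    rw [mul_zero] at hub
    apply tendsto_of_tendsto_of_tendsto_of_le_of_le' tendsto_const_nhds hub
    · filter_upwards [eventually_ge_atTop (0:ℝ)] with t ht
      exact (hZpos t ht).le
    · filter_upwards [eventually_ge_atTop (0:ℝ)] with t ht
      exact hZbound t ht
  constructor
  · -- each X j → 0
    intro j hj2 hjn
    have hxj : 0 < x j := hx j (le_trans one_le_two hj2) hjn
    have hub := hZtendsto.div_const (x j)
    rw [zero_div] at hub
    apply tendsto_of_tendsto_of_tendsto_of_le_of_le' tendsto_const_nhds hub
    · filter_upwards [eventually_ge_atTop (0:ℝ)] with t ht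
      exact (hXjpos j hj2 hjn t ht).le
    · filter_upwards [eventually_ge_atTop (0:ℝ)] with t ht
      rw [le_div_iff₀ hxj]
      have h1 : x j * X j t ≤ Z t := by
        rw [hZ]
        apply Finset.single_le_sum (f := fun i => x i * X i t)
        · intro i hi
          rw [Finset.mem_Icc] at hi
          exact (mul_pos (hx i (le_trans one_le_two hi.1) hi.2)
            (hXjpos i hi.1 hi.2 t ht)).le
        · exact Finset.mem_Icc.2 ⟨hj2, hjn⟩
      linarith
  · refine ⟨K / x 1, div_pos hKpos hx1, ?_⟩
    have heq : ∀ t, 0 ≤ t → X 1 t = (K + ((n:ℝ) - 1) * Z t) / x 1 := by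
      intro t ht
      have h1 := hcons t ht
      field_simp
      linarith
    have h1 : Tendsto (fun t => (K + ((n:ℝ) - 1) * Z t) / x 1) atTop (𝓝 (K / x 1)) := by
      have h2 : Tendsto (fun t => K + ((n:ℝ) - 1) * Z t) atTop (𝓝 (K + ((n:ℝ)-1) * 0)) :=
        tendsto_const_nhds.add (hZtendsto.const_mul _)
      rw [mul_zero, add_zero] at h2
      exact h2.div_const _
    apply h1.congr'
    filter_upwards [eventually_ge_atTop (0:ℝ)] with t ht
    exact (heq t ht).symm
end

section
/- In the n-dimensional army-of-one unaimed system, if the conserved quantity K = x₁X₁(0) - (n-1)·∑_{i=2}^n xᵢXᵢ(0) is negative and all initial data are positive, then X₁(t) → 0 as t → +∞, and every Xⱼ(t) with j ≥ 2 converges to a strictly positive limit. -/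
open Filter Topology

private lemma aux_const_of_deriv_zero {f : ℝ → ℝ} (hf : ∀ t : ℝ, 0 ≤ t → HasDerivAt f 0 t)
    {t : ℝ} (ht : 0 ≤ t) : f t = f 0 := by
  have hcont : ContinuousOn f (Set.Icc 0 t) := fun s hs =>
    ((hf s hs.1).continuousAt).continuousWithinAt
  exact constant_of_has_deriv_right_zero hcont
    (fun s hs => (hf s hs.1).hasDerivWithinAt) t ⟨ht, le_rfl⟩

private lemma aux_solve_exp {a b u : ℝ} (hk : a * Real.exp u = b) :
    a = b * Real.exp (-u) := by
  calc a = a * (Real.exp u * Real.exp (-u)) := by rw [← Real.exp_add]; simp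
    _ = (a * Real.exp u) * Real.exp (-u) := by ring
    _ = b * Real.exp (-u) := by rw [hk]

theorem lanchester_army_of_one_X1_loses (n : ℕ) (hn : 2 ≤ n)
    (x : ℕ → ℝ) (X : ℕ → ℝ → ℝ)
    (hx : ∀ i, 1 ≤ i → i ≤ n → 0 < x i)
    (hX0 : ∀ i, 1 ≤ i → i ≤ n → 0 < X i 0)
    (hX₁ : ∀ t : ℝ, 0 ≤ t → HasDerivAt (X 1)
      ((-(∑ i ∈ Finset.Icc 2 n, x i * X i t)) * X 1 t) t)
    (hXj : ∀ j, 2 ≤ j → j ≤ n → ∀ t : ℝ, 0 ≤ t →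
      HasDerivAt (X j) (-(x 1 / ((n : ℝ) - 1)) * X 1 t * X j t) t)
    (hK : x 1 * X 1 0 - ((n : ℝ) - 1) * ∑ i ∈ Finset.Icc 2 n, x i * X i 0 < 0) :
    Tendsto (X 1) atTop (𝓝 0) ∧
    ∀ j, 2 ≤ j → j ≤ n → ∃ L : ℝ, 0 < L ∧ Tendsto (X j) atTop (𝓝 L) := by
  have hn1 : (0:ℝ) < (n:ℝ) - 1 := by
    have : (2:ℝ) ≤ (n:ℝ) := by exact_mod_cast hn
    linarith
  set c : ℝ := x 1 / ((n:ℝ) - 1) with hc_def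
  have hx1 : 0 < x 1 := hx 1 le_rfl (le_trans one_le_two hn)
  have hX10 : 0 < X 1 0 := hX0 1 le_rfl (le_trans one_le_two hn)
  have hc : 0 < c := div_pos hx1 hn1
  set S : ℝ → ℝ := fun t => ∑ i ∈ Finset.Icc 2 n, x i * X i t with hS_def
  -- continuity of each X i at nonnegative times
  have hXcont : ∀ i, 1 ≤ i → i ≤ n → ∀ t : ℝ, 0 ≤ t → ContinuousAt (X i) t := by
    intro i hi1 hin t ht
    rcases eq_or_lt_of_le hi1 with h1 | h1
    · rw [← h1]; exact (hX₁ t ht).continuousAt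
    · exact (hXj i h1 hin t ht).continuousAt
  -- the "extended" coefficient g(t) = S(max t 0), continuous on all of ℝ
  set g : ℝ → ℝ := fun t => S (max t 0) with hg_def
  have hmaxc : Continuous fun t : ℝ => max t 0 := continuous_id.max continuous_const
  have hgcont : Continuous g := by
    have : ∀ i ∈ Finset.Icc 2 n, Continuous fun t : ℝ => x i * X i (max t 0) := by
      intro i hi
      simp only [Finset.mem_Icc] at hi
      refine continuous_const.mul ?_
      rw [continuous_iff_continuousAt]
      intro t
      exact ContinuousAt.comp
        (hXcont i (le_trans one_le_two hi.1) hi.2 (max t 0) (le_max_right _ _))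
        hmaxc.continuousAt
    simpa [hg_def, hS_def] using continuous_finset_sum _ this
  have hg_eq : ∀ t : ℝ, 0 ≤ t → g t = S t := by
    intro t ht; simp [hg_def, max_eq_left ht]
  set I : ℝ → ℝ := fun t => ∫ s in (0:ℝ)..t, g s with hI_def
  have hI' : ∀ t : ℝ, HasDerivAt I (g t) t := fun t =>
    (hgcont.integral_hasStrictDerivAt 0 t).hasDerivAt
  have hI0 : I 0 = 0 := intervalIntegral.integral_same
  set h : ℝ → ℝ := fun t => X 1 0 * Real.exp (-I t) with hh_def
  have hh' : ∀ t : ℝ, HasDerivAt h (-(g t) * h t) t := by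
    intro t
    have := (((hI' t).neg).exp).const_mul (X 1 0)
    refine this.congr_deriv (Eq.symm ?_)
    simp only [hh_def, Pi.neg_apply]; ring
  have hhpos : ∀ t : ℝ, 0 < h t := fun t => mul_pos hX10 (Real.exp_pos _)
  have hhcont : Continuous h := by
    rw [continuous_iff_continuousAt]; exact fun t => (hh' t).continuousAt
  -- closed form for X 1
  have hX1eq : ∀ t : ℝ, 0 ≤ t → X 1 t = h t := by
    have key : ∀ t : ℝ, 0 ≤ t → X 1 t * Real.exp (I t) = X 1 0 := by
      intro t ht
      have hzero : ∀ s : ℝ, 0 ≤ s →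
          HasDerivAt (fun u => X 1 u * Real.exp (I u)) 0 s := by
        intro s hs
        have := (hX₁ s hs).mul ((hI' s).exp)
        refine this.congr_deriv (Eq.symm ?_)
        rw [hg_eq s hs]
        simp only [hS_def]
        ring
      have h2 := aux_const_of_deriv_zero hzero ht
      simp only [hI0, Real.exp_zero, mul_one] at h2
      exact h2
    intro t ht
    exact aux_solve_exp (key t ht)
  have hX1pos : ∀ t : ℝ, 0 ≤ t → 0 < X 1 t := fun t ht => (hX1eq t ht) ▸ hhpos t
  -- derivative of S
  have hS' : ∀ t : ℝ, 0 ≤ t → HasDerivAt S (-(c * X 1 t) * S t) t := by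
    intro t ht
    have hder : ∀ i ∈ Finset.Icc 2 n, HasDerivAt (fun u => x i * X i u)
        (x i * (-c * X 1 t * X i t)) t := by
      intro i hi
      simp only [Finset.mem_Icc] at hi
      exact (hXj i hi.1 hi.2 t ht).const_mul (x i)
    have := HasDerivAt.fun_sum hder
    refine this.congr_deriv (Eq.symm ?_)
    simp only [hS_def]
    rw [Finset.mul_sum]
    apply Finset.sum_congr rfl
    intro i _; ring
  -- conservation of K
  set K : ℝ := x 1 * X 1 0 - ((n:ℝ) - 1) * S 0 with hK_def
  have hKneg : K < 0 := hK
  have hnc : ((n:ℝ) - 1) * c = x 1 := by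
    rw [hc_def]; field_simp
  have hE : ∀ t : ℝ, 0 ≤ t → x 1 * X 1 t - ((n:ℝ) - 1) * S t = K := by
    intro t ht
    have hzero : ∀ s : ℝ, 0 ≤ s →
        HasDerivAt (fun u => x 1 * X 1 u - ((n:ℝ) - 1) * S u) 0 s := by
      intro s hs
      have := ((hX₁ s hs).const_mul (x 1)).sub ((hS' s hs).const_mul ((n:ℝ) - 1))
      refine this.congr_deriv (Eq.symm ?_)
      simp only [hS_def]
      linear_combination (-(X 1 s * ∑ i ∈ Finset.Icc 2 n, x i * X i s)) * hnc
    exact aux_const_of_deriv_zero hzero ht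
  set ε : ℝ := -K / ((n:ℝ) - 1) with hε_def
  have hε : 0 < ε := div_pos (neg_pos.mpr hKneg) hn1
  have hS_lb : ∀ t : ℝ, 0 ≤ t → ε ≤ S t := by
    intro t ht
    have h1 := hE t ht
    have h2 : 0 < x 1 * X 1 t := mul_pos hx1 (hX1pos t ht)
    rw [hε_def, div_le_iff₀ hn1]
    nlinarith
  have hg_lb : ∀ t : ℝ, ε ≤ g t := fun t => by
    rw [hg_def]; exact hS_lb (max t 0) (le_max_right _ _)
  -- I t ≥ ε t for t ≥ 0
  have hI_lb : ∀ t : ℝ, 0 ≤ t → ε * t ≤ I t := by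
    intro t ht
    have h0 := intervalIntegral.integral_mono_on ht
      (intervalIntegrable_const (μ := MeasureTheory.volume) (c := ε))
      (hgcont.intervalIntegrable 0 t) (fun s _ => hg_lb s)
    simp only [intervalIntegral.integral_const, smul_eq_mul, sub_zero] at h0
    rw [mul_comm]
    exact h0
  -- X 1 tends to 0
  have htend1 : Tendsto (X 1) atTop (𝓝 0) := by
    have heq : X 1 =ᶠ[atTop] h := by
      filter_upwards [eventually_ge_atTop (0:ℝ)] with t ht using hX1eq t ht
    rw [tendsto_congr' heq]
    have hub : ∀ᶠ t : ℝ in atTop, h t ≤ X 1 0 * Real.exp (-(ε * t)) := by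
      filter_upwards [eventually_ge_atTop (0:ℝ)] with t ht
      have h1 := hI_lb t ht
      have h2 := Real.exp_le_exp.mpr (neg_le_neg h1)
      exact mul_le_mul_of_nonneg_left h2 hX10.le
    have hlb : ∀ᶠ t : ℝ in atTop, 0 ≤ h t := Eventually.of_forall fun t => (hhpos t).le
    have htend : Tendsto (fun t : ℝ => X 1 0 * Real.exp (-(ε * t))) atTop (𝓝 0) := by
      have h1 : Tendsto (fun t : ℝ => ε * t) atTop atTop :=
        Tendsto.const_mul_atTop hε tendsto_id
      have h2 : Tendsto (fun t : ℝ => -(ε * t)) atTop atBot := tendsto_neg_atBot_iff.mpr h1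
      have h3 := Real.tendsto_exp_atBot.comp h2
      simpa using h3.const_mul (X 1 0)
    exact squeeze_zero' hlb hub htend
  -- the accumulated integral A of h
  set A : ℝ → ℝ := fun t => ∫ s in (0:ℝ)..t, h s with hA_def
  have hA' : ∀ t : ℝ, HasDerivAt A (h t) t := fun t =>
    (hhcont.integral_hasStrictDerivAt 0 t).hasDerivAt
  have hAmono : Monotone A :=
    monotone_of_deriv_nonneg (fun t => (hA' t).differentiableAt)
      (fun t => by rw [(hA' t).deriv]; exact (hhpos t).le)
  have hA0 : A 0 = 0 := intervalIntegral.integral_same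
  have hh0 : h 0 = X 1 0 := by
    simp only [hh_def, hI0, neg_zero, Real.exp_zero, mul_one]
  have hAbdd : ∀ t : ℝ, A t ≤ X 1 0 / ε := by
    intro t
    rcases le_total t 0 with ht | ht
    · calc A t ≤ A 0 := hAmono ht
        _ = 0 := hA0
        _ ≤ X 1 0 / ε := div_nonneg hX10.le hε.le
    · have h1 : ∫ s in (0:ℝ)..t, ε * h s ≤ ∫ s in (0:ℝ)..t, g s * h s := by
        apply intervalIntegral.integral_mono_on ht
        · exact (continuous_const.mul hhcont).intervalIntegrable 0 t
        · exact (hgcont.mul hhcont).intervalIntegrable 0 t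
        · intro s _
          exact mul_le_mul_of_nonneg_right (hg_lb s) (hhpos s).le
      have h2 : (∫ s in (0:ℝ)..t, g s * h s) = h 0 - h t := by
        have hd : ∀ s ∈ Set.uIcc (0:ℝ) t, HasDerivAt (fun u => -h u) (g s * h s) s := by
          intro s _
          have := (hh' s).neg
          refine this.congr_deriv (Eq.symm ?_); ring
        have := intervalIntegral.integral_eq_sub_of_hasDerivAt hd
          ((hgcont.mul hhcont).intervalIntegrable 0 t)
        rw [this]; ring
      have h3 : (∫ s in (0:ℝ)..t, ε * h s) = ε * A t :=
        intervalIntegral.integral_const_mul ε h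
      have h4 : ε * A t ≤ X 1 0 := by
        calc ε * A t = ∫ s in (0:ℝ)..t, ε * h s := h3.symm
          _ ≤ ∫ s in (0:ℝ)..t, g s * h s := h1
          _ = h 0 - h t := h2
          _ ≤ h 0 := by linarith [hhpos t]
          _ = X 1 0 := hh0
      rw [le_div_iff₀ hε]
      linarith [h4]
  have hbdd : BddAbove (Set.range A) := ⟨X 1 0 / ε, by rintro _ ⟨t, rfl⟩; exact hAbdd t⟩
  have hAtend : Tendsto A atTop (𝓝 (⨆ t, A t)) := tendsto_atTop_ciSup hAmono hbdd
  set M : ℝ := ⨆ t, A t with hM_def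
  refine ⟨htend1, ?_⟩
  intro j hj2 hjn
  -- closed form for X j
  have hXjeq : ∀ t : ℝ, 0 ≤ t → X j t = X j 0 * Real.exp (-(c * A t)) := by
    have key : ∀ t : ℝ, 0 ≤ t → X j t * Real.exp (c * A t) = X j 0 := by
      intro t ht
      have hzero : ∀ s : ℝ, 0 ≤ s →
          HasDerivAt (fun u => X j u * Real.exp (c * A u)) 0 s := by
        intro s hs
        have := (hXj j hj2 hjn s hs).mul (((hA' s).const_mul c).exp)
        refine this.congr_deriv (Eq.symm ?_)
        rw [← hX1eq s hs]
        ring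
      have h2 := aux_const_of_deriv_zero hzero ht
      simp only [hA0, mul_zero, Real.exp_zero, mul_one] at h2
      exact h2
    intro t ht
    exact aux_solve_exp (key t ht)
  refine ⟨X j 0 * Real.exp (-(c * M)), mul_pos (hX0 j (le_trans one_le_two hj2) hjn)
    (Real.exp_pos _), ?_⟩
  have heq : X j =ᶠ[atTop] fun t => X j 0 * Real.exp (-(c * A t)) := by
    filter_upwards [eventually_ge_atTop (0:ℝ)] with t ht using hXjeq t ht
  rw [tendsto_congr' heq]
  have hcont2 : Continuous fun a : ℝ => X j 0 * Real.exp (-(c * a)) :=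
    continuous_const.mul (Real.continuous_exp.comp ((continuous_const.mul continuous_id).neg))
  exact (hcont2.continuousAt.tendsto).comp hAtend
end
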